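/- For every infinite cardinal κ there exists a collection Π of partitions of κ such that: |Π| = 2^κ; every partition in Π is large, i.e., has exactly κ cells; and Π is independent, i.e., for any finitely many pairwise distinct partitions P₁, …, Pₙ ∈ Π and any choice of cells Cᵢ ∈ Pᵢ, the intersection C₁ ∩ … ∩ Cₙ is nonempty. -/

import Mathlib

open Cardinal

universe u


def IsPartition {α : Type u} (P : Set (Set α)) : Prop :=
  (∀ C ∈ P, C.Nonempty) ∧ (∀ C ∈ P, ∀ D ∈ P, C ≠ D → C ∩ D = ∅) ∧ ⋃₀ P = Set.univ

noncomputable section Aux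
open Classical

variable {α : Type u}

def Cell (α : Type u) : Type u := Σ s : Finset α, (↥(s.powerset) → α)

lemma mk_cell [Infinite α] : #(Cell α) = #α := by
  have h1 : ∀ s : Finset α, #(↥(s.powerset) → α) = #α := by
    intro s
    rw [mk_arrow, lift_id, lift_id, mk_coe_finset]
    exact power_nat_eq (aleph0_le_mk α) (Nat.one_le_iff_ne_zero.2 (by simp))
  calc #(Cell α) = Cardinal.sum (fun s : Finset α => #(↥(s.powerset) → α)) :=
        mk_sigma _
    _ = Cardinal.sum (fun _ : Finset α => #α) := by simp_rw [h1]
    _ = #(Finset α) * #α := sum_const' _ _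
    _ = #α * #α := by rw [mk_finset_of_infinite]
    _ = #α := mul_eq_self (aleph0_le_mk α)

def gfun (X : Set α) (p : Cell α) : α :=
  p.2 ⟨p.1.filter (· ∈ X), Finset.mem_powerset.2 (Finset.filter_subset _ _)⟩

lemma gfun_const (X : Set α) (v : α) :
    gfun X ⟨(∅ : Finset α), fun _ => v⟩ = v := rfl

lemma gfun_indep [Nonempty α] (t : Finset (Set α)) (v : Set α → α) :
    ∃ p : Cell α, ∀ X ∈ t, gfun X p = v X := by
  -- a separating element for each pair
  set d : Set α → Set α → α := fun X Y =>
    if h : (symmDiff X Y).Nonempty then h.choose else Classical.arbitrary α with hd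
  have hdmem : ∀ X Y : Set α, X ≠ Y → d X Y ∈ symmDiff X Y := by
    intro X Y h
    have hne : (symmDiff X Y).Nonempty := Set.symmDiff_nonempty.2 h
    simp only [hd, dif_pos hne]
    exact hne.choose_spec
  set s : Finset α := Finset.image (fun q : Set α × Set α => d q.1 q.2)
    ((t ×ˢ t).filter fun q => q.1 ≠ q.2) with hs
  have hsep : ∀ X ∈ t, ∀ Y ∈ t, X ≠ Y →
      s.filter (· ∈ X) ≠ s.filter (· ∈ Y) := by
    intro X hX Y hY hne
    have hdm : d X Y ∈ s := by
      rw [hs]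
      exact Finset.mem_image.2 ⟨(X, Y), by simp [hX, hY, hne], rfl⟩
    rcases hdmem X Y hne with h | h
    · intro heq
      have h1 : d X Y ∈ s.filter (· ∈ X) := Finset.mem_filter.2 ⟨hdm, h.1⟩
      rw [heq] at h1
      exact h.2 (Finset.mem_filter.1 h1).2
    · intro heq
      have h1 : d X Y ∈ s.filter (· ∈ Y) := Finset.mem_filter.2 ⟨hdm, h.1⟩
      rw [← heq] at h1
      exact h.2 (Finset.mem_filter.1 h1).2
  refine ⟨⟨s, fun q => if h : ∃ X ∈ t, s.filter (· ∈ X) = (q : Finset α) then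
      v h.choose else Classical.arbitrary α⟩, ?_⟩
  intro X hX
  show (fun q : ↥(s.powerset) => if h : ∃ X ∈ t, s.filter (· ∈ X) = (q : Finset α) then
      v h.choose else Classical.arbitrary α) ⟨s.filter (· ∈ X), _⟩ = v X
  have hex : ∃ X' ∈ t, s.filter (· ∈ X') = s.filter (· ∈ X) := ⟨X, hX, rfl⟩
  simp only [dif_pos hex]
  obtain ⟨hX', heq⟩ := hex.choose_spec
  by_cases h : hex.choose = X
  · rw [h]
  · exact absurd heq (hsep _ hX' _ hX h)

variable (e : α ≃ Cell α)

def hfun (X : Set α) (a : α) : α := gfun X (e a)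

def PartOf (X : Set α) : Set (Set α) := Set.range (fun v => hfun e X ⁻¹' {v})

lemma hfun_surj (X : Set α) : Function.Surjective (hfun e X) := fun v =>
  ⟨e.symm ⟨(∅ : Finset α), fun _ => v⟩, by
    simp only [hfun, Equiv.apply_symm_apply]; exact (congrArg (gfun X) (e.apply_symm_apply _)).trans (gfun_const X v)⟩

lemma part_isPartition (X : Set α) : IsPartition (PartOf e X) := by
  refine ⟨?_, ?_, ?_⟩
  · rintro C ⟨v, rfl⟩
    obtain ⟨a, ha⟩ := hfun_surj e X v
    exact ⟨a, ha⟩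
  · rintro C ⟨v, rfl⟩ D ⟨w, rfl⟩ hne
    ext a
    simp only [Set.mem_inter_iff, Set.mem_preimage, Set.mem_singleton_iff, Set.mem_empty_iff_false,
      iff_false]
    rintro ⟨h1, h2⟩
    exact hne (by rw [← h1, ← h2])
  · ext a
    simp only [Set.mem_sUnion, Set.mem_univ, iff_true]
    exact ⟨hfun e X ⁻¹' {hfun e X a}, ⟨hfun e X a, rfl⟩, rfl⟩

lemma part_card (X : Set α) : #(PartOf e X) = #α := by
  rw [PartOf, mk_range_eq]
  intro v w h
  obtain ⟨a, ha⟩ := hfun_surj e X v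
  have h' : hfun e X ⁻¹' {v} = hfun e X ⁻¹' {w} := h
  have : a ∈ hfun e X ⁻¹' {w} := h' ▸ ha
  rw [← ha]; exact this

lemma part_ne [Nontrivial α] {X Y : Set α} (a₀ : α) (h₀ : a₀ ∈ X \ Y) :
    PartOf e X ≠ PartOf e Y := by
  obtain ⟨u, v, huv⟩ := exists_pair_ne α
  intro hPQ
  have hC : hfun e X ⁻¹' {u} ∈ PartOf e Y := hPQ ▸ ⟨u, rfl⟩
  obtain ⟨w, hw⟩ := hC
  -- point a₂ : constant cell
  set a₂ : α := e.symm ⟨(∅ : Finset α), fun _ => u⟩ with ha₂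
  have h₂X : hfun e X a₂ = u := by
    simp only [hfun, ha₂, Equiv.apply_symm_apply]; exact (congrArg (gfun X) (e.apply_symm_apply _)).trans (gfun_const X u)
  have h₂Y : hfun e Y a₂ = u := by
    simp only [hfun, ha₂, Equiv.apply_symm_apply]; exact (congrArg (gfun Y) (e.apply_symm_apply _)).trans (gfun_const Y u)
  have ha₂C : a₂ ∈ hfun e X ⁻¹' {u} := h₂X
  rw [← hw] at ha₂C
  have hwu : w = u := by
    have := ha₂C
    simp only [Set.mem_preimage, Set.mem_singleton_iff] at this
    rw [← this, h₂Y]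
  -- point a₁ : separating cell
  set f : ↥(({a₀} : Finset α).powerset) → α :=
    fun q => if (q : Finset α) = {a₀} then u else v with hf
  set a₁ : α := e.symm ⟨{a₀}, f⟩ with ha₁
  have h₁X : hfun e X a₁ = u := by
    simp only [hfun, ha₁, Equiv.apply_symm_apply]
    rw [show e (e.symm ⟨{a₀}, f⟩) = ⟨{a₀}, f⟩ from e.apply_symm_apply _]
    show f ⟨({a₀} : Finset α).filter (· ∈ X), _⟩ = u
    have : ({a₀} : Finset α).filter (· ∈ X) = {a₀} := by
      rw [Finset.filter_singleton, if_pos h₀.1]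
    simp only [hf, this, if_pos rfl]
  have h₁Y : hfun e Y a₁ = v := by
    simp only [hfun, ha₁, Equiv.apply_symm_apply]
    rw [show e (e.symm ⟨{a₀}, f⟩) = ⟨{a₀}, f⟩ from e.apply_symm_apply _]
    show f ⟨({a₀} : Finset α).filter (· ∈ Y), _⟩ = v
    have : ({a₀} : Finset α).filter (· ∈ Y) = ∅ := by
      rw [Finset.filter_singleton, if_neg h₀.2]
    simp only [hf]
    rw [if_neg (by simp only [this]; exact fun h => Finset.singleton_ne_empty a₀ h.symm)]
  have ha₁C : a₁ ∈ hfun e X ⁻¹' {u} := h₁X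
  rw [← hw] at ha₁C
  simp only [Set.mem_preimage, Set.mem_singleton_iff] at ha₁C
  rw [h₁Y, hwu] at ha₁C
  exact huv ha₁C.symm

lemma part_injective [Nontrivial α] : Function.Injective (PartOf e) := by
  intro X Y h
  by_contra hne
  obtain ⟨a₀, ha₀⟩ := Set.symmDiff_nonempty.2 hne
  rcases ha₀ with h₀ | h₀
  · exact part_ne e a₀ h₀ h
  · exact part_ne e a₀ h₀ h.symm

end Aux

theorem stmt_12 (κ : Cardinal.{u}) (hκ : Cardinal.aleph0 ≤ κ) :
    ∃ Ps : Set (Set (Set κ.out)),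
      #Ps = 2 ^ κ ∧
      (∀ P ∈ Ps, IsPartition P ∧ #P = κ) ∧
      (∀ t : Finset (Set (Set κ.out)), (t : Set (Set (Set κ.out))) ⊆ Ps → t.Nonempty →
        ∀ c : Set (Set κ.out) → Set κ.out, (∀ P ∈ t, c P ∈ P) →
          (⋂ P ∈ t, c P).Nonempty) := by
  classical
  have hα : #κ.out = κ := mk_out κ
  haveI hinf : Infinite κ.out := Cardinal.infinite_iff.2 (by rw [hα]; exact hκ)
  obtain ⟨e⟩ := Cardinal.eq.1 (mk_cell (α := κ.out)).symm
  refine ⟨Set.range (PartOf e), ?_, ?_, ?_⟩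
  · rw [mk_range_eq _ (part_injective e), mk_set, hα]
  · rintro P ⟨X, rfl⟩
    exact ⟨part_isPartition e X, by rw [part_card, hα]⟩
  · intro t ht htne c hc
    set XP : Set (Set κ.out) → Set κ.out := fun P =>
      if h : ∃ X, PartOf e X = P then h.choose else ∅ with hXP
    have hXPs : ∀ P ∈ t, PartOf e (XP P) = P := by
      intro P hP
      obtain ⟨X, hX'⟩ := ht hP
      have hex : ∃ X, PartOf e X = P := ⟨X, hX'⟩
      simp only [hXP, dif_pos hex]
      exact hex.choose_spec
    have hv : ∀ P ∈ t, ∃ w, hfun e (XP P) ⁻¹' {w} = c P := by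
      intro P hP
      have h1 : c P ∈ PartOf e (XP P) := by rw [hXPs P hP]; exact hc P hP
      exact h1
    set vP : Set (Set κ.out) → κ.out := fun P =>
      if h : ∃ w, hfun e (XP P) ⁻¹' {w} = c P then h.choose else Classical.arbitrary _
      with hvP
    have hvPs : ∀ P ∈ t, hfun e (XP P) ⁻¹' {vP P} = c P := by
      intro P hP
      have hex := hv P hP
      simp only [hvP, dif_pos hex]
      exact hex.choose_spec
    set T : Finset (Set κ.out) := t.image XP with hT
    set v : Set κ.out → κ.out := fun X =>
      if h : ∃ P ∈ t, XP P = X then vP h.choose else Classical.arbitrary _ with hvdef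
    obtain ⟨p, hp⟩ := gfun_indep T v
    refine ⟨e.symm p, ?_⟩
    simp only [Set.mem_iInter]
    intro P hP
    have hXT : XP P ∈ T := Finset.mem_image.2 ⟨P, hP, rfl⟩
    have h1 : hfun e (XP P) (e.symm p) = v (XP P) := by
      simp only [hfun, Equiv.apply_symm_apply]
      exact hp _ hXT
    have hex : ∃ P' ∈ t, XP P' = XP P := ⟨P, hP, rfl⟩
    have h2 : v (XP P) = vP P := by
      simp only [hvdef, dif_pos hex]
      obtain ⟨hP't, hP'eq⟩ := hex.choose_spec
      have : hex.choose = P := by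
        have := congrArg (PartOf e) hP'eq
        rwa [hXPs _ hP't, hXPs _ hP] at this
      rw [this]
    rw [← hvPs P hP]
    show hfun e (XP P) (e.symm p) ∈ ({vP P} : Set κ.out)
    rw [h1, h2]; rfl
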